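/- Let $0 \le t_0 \le T/2$ with $t_0 > \sqrt 2$. Then $\sup_{f \in \mathcal{L}_2(T)} f'(t_0) = \sqrt 2$. -/

import Mathlib

open Set Real
open intervalIntegral

/-- Membership in Landau's class `𝓛₂(T)`. -/
def InL2 (T : ℝ) (f f' : ℝ → ℝ) : Prop :=
  (∀ t ∈ Icc 0 T, HasDerivWithinAt f (f' t) (Icc 0 T) t) ∧
  (∀ t ∈ Icc 0 T, |f t| ≤ 1) ∧
  LipschitzOnWith 1 f' (Icc 0 T)

noncomputable def tent (c s : ℝ) : ℝ → ℝ := fun t => max 0 (min (t - (c - s)) (c + s - t))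

lemma tent_cont (c s : ℝ) : Continuous (tent c s) := by unfold tent; fun_prop

lemma tent_nonneg (c s : ℝ) (t : ℝ) : 0 ≤ tent c s t := le_max_left _ _

lemma tent_lip (c s : ℝ) : LipschitzWith 1 (tent c s) := by
  have h1 : LipschitzWith 1 (fun t : ℝ => t - (c - s)) :=
    LipschitzWith.of_dist_le_mul fun x y => by simp [Real.dist_eq]
  have h2 : LipschitzWith 1 (fun t : ℝ => c + s - t) :=
    LipschitzWith.of_dist_le_mul fun x y => by
      simp [Real.dist_eq]
      rw [abs_sub_comm]
      apply le_of_eq; ring_nf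
  have h3 := h1.min h2
  have h4 := ((LipschitzWith.const' (0:ℝ) (K := 1)).max h3)
  exact h4.weaken (by simp)

lemma tent_at (c s : ℝ) (hs : 0 ≤ s) : tent c s c = s := by
  simp [tent, hs]

lemma tent_int (c s T : ℝ) (hs : 0 ≤ s) (h0 : 0 ≤ c - s) (hT : c + s ≤ T) :
    ∫ u in (0:ℝ)..T, tent c s u = s^2 := by
  have hint : ∀ a b : ℝ, IntervalIntegrable (tent c s) MeasureTheory.volume a b :=
    fun a b => (tent_cont c s).intervalIntegrable a b
  have e1 : ∫ u in (0:ℝ)..(c-s), tent c s u = 0 := by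
    rw [integral_congr (g := fun _ => (0:ℝ)) ?_, integral_const]
    · simp
    · intro u hu
      rw [uIcc_of_le h0] at hu
      exact max_eq_left ((min_le_left _ _).trans (by linarith [hu.2]))
  have e2 : ∫ u in (c-s)..c, tent c s u = s^2/2 := by
    have congr2 : EqOn (tent c s) (fun u => u - (c - s)) (uIcc (c-s) c) := by
      intro u hu
      rw [uIcc_of_le (by linarith)] at hu
      have h1 : u - (c - s) ≤ c + s - u := by linarith [hu.2]
      have h2 : (0:ℝ) ≤ u - (c - s) := by linarith [hu.1]
      simp only [tent]
      rw [min_eq_left h1, max_eq_right h2]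
    rw [integral_congr congr2]
    have : c = (c - s) + s := by ring
    rw [this]
    rw [integral_sub intervalIntegrable_id (intervalIntegrable_const)]
    rw [integral_id, integral_const]
    simp; ring
  have e3 : ∫ u in c..(c+s), tent c s u = s^2/2 := by
    have congr3 : EqOn (tent c s) (fun u => c + s - u) (uIcc c (c+s)) := by
      intro u hu
      rw [uIcc_of_le (by linarith)] at hu
      have h1 : c + s - u ≤ u - (c - s) := by linarith [hu.1]
      have h2 : (0:ℝ) ≤ c + s - u := by linarith [hu.2]
      simp only [tent]
      rw [min_eq_right h1, max_eq_right h2]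
    rw [integral_congr congr3]
    rw [integral_sub intervalIntegrable_const intervalIntegrable_id]
    rw [integral_id, integral_const]
    simp; ring
  have e4 : ∫ u in (c+s)..T, tent c s u = 0 := by
    rw [integral_congr (g := fun _ => (0:ℝ)) ?_, integral_const]
    · simp
    · intro u hu
      rw [uIcc_of_le hT] at hu
      exact max_eq_left ((min_le_right _ _).trans (by linarith [hu.1]))
  have a1 := integral_add_adjacent_intervals (hint 0 (c-s)) (hint (c-s) c)
  have a2 := integral_add_adjacent_intervals (hint 0 c) (hint c (c+s))
  have a3 := integral_add_adjacent_intervals (hint 0 (c+s)) (hint (c+s) T)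
  rw [← a3, ← a2, ← a1, e1, e2, e3, e4]; ring

/-- Pointwise Landau problem, interior case: if `0 ≤ t₀ ≤ T/2` with
`t₀ > √2`, then `sup_{f ∈ 𝓛₂(T)} f'(t₀) = √2` (and it is attained). -/
theorem landau_pointwise_sup_interior (T t₀ : ℝ) (ht₀0 : 0 ≤ t₀)
    (ht₀T : t₀ ≤ T / 2) (ht₀2 : Real.sqrt 2 < t₀) :
    IsGreatest {y : ℝ | ∃ f f' : ℝ → ℝ, InL2 T f f' ∧ y = f' t₀}
      (Real.sqrt 2) := by
  set s : ℝ := Real.sqrt 2 with hs_def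
  have hs0 : 0 < s := Real.sqrt_pos.mpr (by norm_num)
  have hs2 : s ^ 2 = 2 := Real.sq_sqrt (by norm_num)
  have hleft : 0 ≤ t₀ - s := by linarith
  have hright : t₀ + s ≤ T := by linarith
  have hT0 : 0 ≤ T := by linarith
  constructor
  · -- attainment
    refine ⟨fun t => -1 + ∫ u in (0:ℝ)..t, tent t₀ s u, tent t₀ s, ⟨?_, ?_, ?_⟩, ?_⟩
    · intro t _
      have hd : HasDerivAt (fun t => -1 + ∫ u in (0:ℝ)..t, tent t₀ s u) (tent t₀ s t) t := by
        have := ((tent_cont t₀ s).integral_hasStrictDerivAt 0 t).hasDerivAt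
        exact this.const_add (-1)
      exact hd.hasDerivWithinAt
    · intro t ht
      have hmono : Monotone (fun t => -1 + ∫ u in (0:ℝ)..t, tent t₀ s u) := by
        apply monotone_of_hasDerivAt_nonneg (f' := tent t₀ s)
        · intro x
          exact (((tent_cont t₀ s).integral_hasStrictDerivAt 0 x).hasDerivAt).const_add (-1)
        · intro x; exact tent_nonneg t₀ s x
      have h0 : (fun t => -1 + ∫ u in (0:ℝ)..t, tent t₀ s u) 0 = -1 := by simp
      have hT : (fun t => -1 + ∫ u in (0:ℝ)..t, tent t₀ s u) T = 1 := by
        simp only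
        rw [tent_int t₀ s T hs0.le hleft hright, hs2]; norm_num
      rw [abs_le]
      constructor
      · calc (-1:ℝ) = _ := h0.symm
          _ ≤ _ := hmono ht.1
      · calc _ ≤ _ := hmono ht.2
          _ = 1 := hT
    · exact (tent_lip t₀ s).lipschitzOnWith
    · rw [tent_at t₀ s hs0.le]
  · -- upper bound
    rintro y ⟨f, f', ⟨hderiv, hbound, hlip⟩, rfl⟩
    have ht₀mem : t₀ ∈ Icc 0 T := ⟨ht₀0, by linarith⟩
    have hlipb : ∀ x ∈ Icc 0 T, |f' x - f' t₀| ≤ |x - t₀| := by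
      intro x hx
      have := hlip.dist_le_mul x hx t₀ ht₀mem
      simpa [Real.dist_eq] using this
    have hfc : ContinuousOn f (Icc 0 T) := fun t ht => (hderiv t ht).continuousWithinAt
    -- forward inequality
    have hfwd : f t₀ ≤ f (t₀ + s) - f' t₀ * s + s^2/2 := by
      have hsub : Icc t₀ (t₀ + s) ⊆ Icc 0 T := Icc_subset_Icc ht₀0 hright
      have hmono : MonotoneOn (fun t => f t - f' t₀ * (t - t₀) + (t - t₀)^2/2) (Icc t₀ (t₀ + s)) := by
        apply monotoneOn_of_hasDerivWithinAt_nonneg (convex_Icc _ _)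
          (f' := fun t => f' t - f' t₀ + (t - t₀))
        · exact ContinuousOn.add ((hfc.mono hsub).sub (by fun_prop)) (by fun_prop)
        · intro x hx
          rw [interior_Icc]
          rw [interior_Icc] at hx
          have hx' : x ∈ Icc 0 T := hsub (Ioo_subset_Icc_self hx)
          have h1 : HasDerivWithinAt f (f' x) (Ioo t₀ (t₀ + s)) x :=
            (hderiv x hx').mono (fun u hu => hsub (Ioo_subset_Icc_self hu))
          have h2 : HasDerivAt (fun t => f' t₀ * (t - t₀)) (f' t₀) x := by
            simpa using (((hasDerivAt_id x).sub_const t₀).const_mul (f' t₀))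
          have h3 : HasDerivAt (fun t => (t - t₀)^2/2) (x - t₀) x := by
            have := (((hasDerivAt_id x).sub_const t₀).pow 2).div_const 2
            exact this.congr_deriv (by norm_num)
          exact (h1.sub h2.hasDerivWithinAt).add h3.hasDerivWithinAt
        · intro x hx
          rw [interior_Icc] at hx
          have hx' : x ∈ Icc 0 T := hsub (Ioo_subset_Icc_self hx)
          have := hlipb x hx'
          rw [abs_sub_comm] at this
          have habs : f' t₀ - f' x ≤ |x - t₀| := le_trans (le_abs_self _) this
          have : f' t₀ - f' x ≤ x - t₀ := by
            rwa [abs_of_nonneg (by linarith [hx.1])] at habs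
          linarith
      have := hmono (left_mem_Icc.mpr (by linarith)) (right_mem_Icc.mpr (by linarith))
        (by linarith)
      simp only at this
      nlinarith [this]
    -- backward inequality
    have hbwd : f (t₀ - s) + f' t₀ * s - s^2/2 ≤ f t₀ := by
      have hsub : Icc (t₀ - s) t₀ ⊆ Icc 0 T := Icc_subset_Icc hleft (by linarith)
      have hmono : MonotoneOn (fun t => f t - f' t₀ * (t - t₀) - (t - t₀)^2/2) (Icc (t₀ - s) t₀) := by
        apply monotoneOn_of_hasDerivWithinAt_nonneg (convex_Icc _ _)
          (f' := fun t => f' t - f' t₀ - (t - t₀))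
        · exact ContinuousOn.sub ((hfc.mono hsub).sub (by fun_prop)) (by fun_prop)
        · intro x hx
          rw [interior_Icc]
          rw [interior_Icc] at hx
          have hx' : x ∈ Icc 0 T := hsub (Ioo_subset_Icc_self hx)
          have h1 : HasDerivWithinAt f (f' x) (Ioo (t₀ - s) t₀) x :=
            (hderiv x hx').mono (fun u hu => hsub (Ioo_subset_Icc_self hu))
          have h2 : HasDerivAt (fun t => f' t₀ * (t - t₀)) (f' t₀) x := by
            simpa using (((hasDerivAt_id x).sub_const t₀).const_mul (f' t₀))
          have h3 : HasDerivAt (fun t => (t - t₀)^2/2) (x - t₀) x := by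
            have := (((hasDerivAt_id x).sub_const t₀).pow 2).div_const 2
            exact this.congr_deriv (by norm_num)
          exact (h1.sub h2.hasDerivWithinAt).sub h3.hasDerivWithinAt
        · intro x hx
          rw [interior_Icc] at hx
          have hx' : x ∈ Icc 0 T := hsub (Ioo_subset_Icc_self hx)
          have := hlipb x hx'
          rw [abs_sub_comm] at this
          have habs : f' t₀ - f' x ≤ |x - t₀| := le_trans (le_abs_self _) this
          have : f' t₀ - f' x ≤ t₀ - x := by
            rwa [abs_of_nonpos (by linarith [hx.2]), neg_sub] at habs
          linarith
      have := hmono (left_mem_Icc.mpr (by linarith)) (right_mem_Icc.mpr (by linarith))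
        (by linarith)
      simp only at this
      nlinarith [this]
    have hb1 : |f (t₀ + s)| ≤ 1 := hbound _ ⟨by linarith, hright⟩
    have hb2 : |f (t₀ - s)| ≤ 1 := hbound _ ⟨hleft, by linarith⟩
    have h1 := (abs_le.mp hb1).2
    have h2 := (abs_le.mp hb2).1
    nlinarith [hfwd, hbwd, h1, h2, hs0, hs2]
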